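/- Let R be a ring with 1, n ≥ 1, and A an n×n matrix over R. The symmetric characteristic polynomial p(x) = s-det(xI − A) ∈ R[x] has degree at most n, and its coefficient of x^n equals n! (i.e., p(x) = λ_0 + λ_1 x + ⋯ + λ_{n−1} x^{n−1} + n!·x^n for some λ_0,…,λ_{n−1} ∈ R). -/

import Mathlib

open Polynomial in
/-- The preadjoint `A*` of an `n × n` matrix `A` over a (possibly noncommutative) ring `R`:
its `(r, s)` entry is the sum, over all permutations `τ, ρ` of `Fin n` with `τ s = s` and
`ρ s = r`, of `sgn ρ` times the ordered product
`a_{τ(1),ρ(τ(1))} ⋯ a_{τ(s-1),ρ(τ(s-1))} · a_{τ(s+1),ρ(τ(s+1))} ⋯ a_{τ(n),ρ(τ(n))}`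
(the factor at position `s` is omitted). -/
def Matrix.preadjoint {n : ℕ} {R : Type*} [Ring R] (A : Matrix (Fin n) (Fin n) R) :
    Matrix (Fin n) (Fin n) R :=
  fun r s =>
    ∑ τ : Equiv.Perm (Fin n), ∑ ρ : Equiv.Perm (Fin n),
      if τ s = s ∧ ρ s = r then
        ((Equiv.Perm.sign ρ : ℤ)) •
          (((List.finRange n).filter (fun k => k ≠ s)).map
            (fun k => A (τ k) (ρ (τ k)))).prod
      else 0

open Polynomial in
/-- The characteristic matrix `x·I - A` of `A`, as a matrix over `R[x]`. -/
noncomputable def Matrix.charMat {n : ℕ} {R : Type*} [Ring R] (A : Matrix (Fin n) (Fin n) R) :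
    Matrix (Fin n) (Fin n) R[X] :=
  (X : R[X]) • (1 : Matrix (Fin n) (Fin n) R[X]) - A.map C

/-- The symmetric determinant `s-det A = tr(A* · A) = tr(A · A*)`. -/
def Matrix.sdet {n : ℕ} {R : Type*} [Ring R] (A : Matrix (Fin n) (Fin n) R) : R :=
  Matrix.trace (A.preadjoint * A)

open Polynomial in
/-- The symmetric characteristic polynomial `p(x) = s-det(x·I - A) ∈ R[x]`. -/
noncomputable def Matrix.sCharPoly {n : ℕ} {R : Type*} [Ring R] (A : Matrix (Fin n) (Fin n) R) : R[X] :=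
  A.charMat.sdet

section helpers
open Polynomial
variable {R : Type*} [Ring R]

lemma coeff_mul_of_degree_le' {p q : R[X]} {a b : ℕ}
    (hp : p.degree ≤ a) (hq : q.degree ≤ b) :
    (p * q).coeff (a + b) = p.coeff a * q.coeff b := by
  rw [Polynomial.coeff_mul]
  apply Finset.sum_eq_single (a, b)
  · rintro ⟨i, j⟩ hmem hne
    rw [Finset.HasAntidiagonal.mem_antidiagonal] at hmem
    have hne' : i ≠ a ∨ j ≠ b := by
      by_contra hc; push_neg at hc; exact hne (Prod.ext hc.1 hc.2)
    rcases lt_or_ge (a : WithBot ℕ) i with h | h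
    · rw [Polynomial.coeff_eq_zero_of_degree_lt (lt_of_le_of_lt hp h), zero_mul]
    · have hia : i ≤ a := by exact_mod_cast h
      have : b < j := by rcases hne' with h'|h' <;> omega
      rw [Polynomial.coeff_eq_zero_of_degree_lt
        (lt_of_le_of_lt hq (by exact_mod_cast this)), mul_zero]
  · simp

lemma list_prod_ite {α : Type*} (l : List α) (p : α → Prop) [DecidablePred p] :
    (l.map (fun a => if p a then (1 : R) else 0)).prod
      = if ∀ a ∈ l, p a then (1 : R) else 0 := by
  induction l with
  | nil => simp
  | cons a l ih =>
    simp only [List.map_cons, List.prod_cons, ih, List.mem_cons]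
    by_cases h : p a
    · by_cases h2 : ∀ a ∈ l, p a <;> simp [h, h2]
    · simp [h]

lemma length_filter_ne {n : ℕ} (s : Fin n) :
    ((List.finRange n).filter (fun k => k ≠ s)).length = n - 1 := by
  have hs : s ∈ List.finRange n := List.mem_finRange s
  have hnd : (List.finRange n).Nodup := List.nodup_finRange n
  have heq : (List.finRange n).filter (fun k => k ≠ s) = (List.finRange n).erase s := by
    rw [List.Nodup.erase_eq_filter hnd s]
    apply List.filter_congr
    intro k _
    by_cases h : k = s <;> simp [h, bne]
  rw [heq, List.length_erase_of_mem hs, List.length_finRange]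

lemma card_fixing {n : ℕ} (s : Fin n) :
    Fintype.card {τ : Equiv.Perm (Fin n) // τ s = s} = (n-1).factorial := by
  classical
  have e1 : {τ : Equiv.Perm (Fin n) // τ s = s}
      ≃ {f : Equiv.Perm (Fin n) // ∀ a, ¬ (a ≠ s) → f a = a} :=
    Equiv.subtypeEquivRight (by
      intro f
      constructor
      · intro hf a ha
        rw [not_ne_iff] at ha; subst ha; exact hf
      · intro hf; exact hf s (by simp))
  have e2 : Equiv.Perm {x : Fin n // x ≠ s}
      ≃ {f : Equiv.Perm (Fin n) // ∀ a, ¬ (a ≠ s) → f a = a} :=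
    Equiv.Perm.subtypeEquivSubtypePerm _
  have hcard : Fintype.card {x : Fin n // x ≠ s} = n - 1 := by
    rw [Fintype.card_subtype_compl, Fintype.card_subtype_eq, Fintype.card_fin]
  rw [Fintype.card_congr (e1.trans e2.symm), Fintype.card_perm, hcard]

end helpers

section main
open Polynomial
variable {R : Type*} [Ring R] {n : ℕ} (A : Matrix (Fin n) (Fin n) R)

lemma charMat_apply (i j : Fin n) :
    A.charMat i j = (if i = j then (X : R[X]) else 0) - C (A i j) := by
  simp [Matrix.charMat, Matrix.sub_apply, Matrix.smul_apply, Matrix.one_apply,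
    Matrix.map_apply, smul_ite, smul_eq_mul]

lemma charMat_degree_le (i j : Fin n) : (A.charMat i j).degree ≤ 1 := by
  rw [charMat_apply]
  refine (degree_sub_le _ _).trans (max_le ?_ (degree_C_le.trans (by norm_num)))
  split
  · exact degree_X_le
  · simp

lemma charMat_natDegree_le (i j : Fin n) : (A.charMat i j).natDegree ≤ 1 :=
  natDegree_le_iff_degree_le.mpr (by exact_mod_cast charMat_degree_le A i j)

lemma charMat_coeff_one (i j : Fin n) :
    (A.charMat i j).coeff 1 = if i = j then (1 : R) else 0 := by
  rw [charMat_apply]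
  split <;> simp [coeff_X_one, coeff_C]

lemma preadjoint_charMat_coeff (r s : Fin n) :
    (A.charMat.preadjoint r s).coeff (n - 1)
      = if r = s then ((n-1).factorial : R) else 0 := by
  classical
  unfold Matrix.preadjoint
  rw [Polynomial.finset_sum_coeff]
  have hterm : ∀ τ ρ : Equiv.Perm (Fin n),
      (if τ s = s ∧ ρ s = r then
        ((Equiv.Perm.sign ρ : ℤ)) •
          (((List.finRange n).filter (fun k => k ≠ s)).map
            (fun k => A.charMat (τ k) (ρ (τ k)))).prod
      else 0).coeff (n-1)
      = if τ s = s ∧ ρ = 1 ∧ r = s then (1 : R) else 0 := by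
    intro τ ρ
    by_cases h : τ s = s ∧ ρ s = r
    · rw [if_pos h, Polynomial.coeff_smul]
      set l := (List.finRange n).filter (fun k => (k : Fin n) ≠ s) with hl
      have hlen : (l.map (fun k => A.charMat (τ k) (ρ (τ k)))).length = n - 1 := by
        rw [List.length_map, hl, length_filter_ne]
      have hcoeff := coeff_list_prod_of_natDegree_le
        (l.map (fun k => A.charMat (τ k) (ρ (τ k)))) 1
        (by
          intro p hp
          simp only [List.mem_map] at hp
          obtain ⟨k, _, rfl⟩ := hp
          exact charMat_natDegree_le A _ _)
      rw [hlen, mul_one] at hcoeff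
      rw [hcoeff, List.map_map]
      have hcomp : ((fun p => p.coeff 1) ∘ fun k => A.charMat (τ k) (ρ (τ k)))
          = fun k => if τ k = ρ (τ k) then (1:R) else 0 := by
        funext k; exact charMat_coeff_one A _ _
      rw [hcomp, list_prod_ite]
      by_cases hall : ∀ k ∈ l, τ k = ρ (τ k)
      · have hfix : ∀ j : Fin n, j ≠ s → ρ j = j := by
          intro j hj
          have hks : τ.symm j ≠ s := by
            intro hc
            apply hj
            have := congrArg τ hc
            rw [Equiv.apply_symm_apply, h.1] at this
            exact this
          have hmem : τ.symm j ∈ l := by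
            simp [hl, List.mem_filter, List.mem_finRange, hks]
          have h2 := hall _ hmem
          rw [Equiv.apply_symm_apply] at h2
          exact h2.symm
        have hrs : r = s := by
          by_contra hrs
          have h1 : ρ r = r := hfix r hrs
          have h2 : ρ s = r := h.2
          exact hrs (ρ.injective (h1.trans h2.symm))
        have hρ : ρ = 1 := Equiv.ext fun j => by
          by_cases hj : j = s
          · subst hj; simpa [hrs, Equiv.Perm.one_apply] using h.2
          · simpa [Equiv.Perm.one_apply] using hfix j hj
        rw [if_pos hall, if_pos ⟨h.1, hρ, hrs⟩, hρ]
        simp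
      · rw [if_neg hall, smul_zero, if_neg]
        rintro ⟨-, rfl, rfl⟩
        exact hall (fun k _ => by simp)
    · rw [if_neg h, Polynomial.coeff_zero, if_neg]
      rintro ⟨h1, rfl, rfl⟩
      exact h ⟨h1, rfl⟩
  have hinner : ∀ τ : Equiv.Perm (Fin n),
      (∑ ρ : Equiv.Perm (Fin n),
        (if τ s = s ∧ ρ s = r then
          ((Equiv.Perm.sign ρ : ℤ)) •
            (((List.finRange n).filter (fun k => k ≠ s)).map
              (fun k => A.charMat (τ k) (ρ (τ k)))).prod
        else 0)).coeff (n-1)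
      = if τ s = s ∧ r = s then (1 : R) else 0 := by
    intro τ
    rw [Polynomial.finset_sum_coeff]
    have : ∀ ρ : Equiv.Perm (Fin n),
        (if τ s = s ∧ ρ s = r then
          ((Equiv.Perm.sign ρ : ℤ)) •
            (((List.finRange n).filter (fun k => k ≠ s)).map
              (fun k => A.charMat (τ k) (ρ (τ k)))).prod
        else 0).coeff (n-1)
        = if ρ = 1 then (if τ s = s ∧ r = s then (1:R) else 0) else 0 := by
      intro ρ
      rw [hterm τ ρ]
      by_cases hρ : ρ = 1 <;> by_cases h1 : τ s = s <;> by_cases h2 : r = s <;>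
        simp [hρ, h1, h2]
    simp_rw [this]
    rw [Finset.sum_ite_eq' Finset.univ (1 : Equiv.Perm (Fin n))]
    simp
  simp_rw [hinner]
  by_cases h2 : r = s
  · simp only [h2, and_true, if_true]
    rw [Finset.sum_boole]
    norm_cast
    rw [← Fintype.card_subtype, card_fixing]
  · simp [h2]

set_option maxHeartbeats 1000000 in
lemma preadjoint_charMat_degree_le (r s : Fin n) :
    (A.charMat.preadjoint r s).degree ≤ (n - 1 : ℕ) := by
  classical
  unfold Matrix.preadjoint
  refine (Polynomial.degree_sum_le _ _).trans (Finset.sup_le fun τ _ => ?_)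
  refine (Polynomial.degree_sum_le _ _).trans (Finset.sup_le fun ρ _ => ?_)
  by_cases hc : τ s = s ∧ ρ s = r
  · rw [if_pos hc, zsmul_eq_mul]
    refine (Polynomial.degree_mul_le _ _).trans ?_
    have hz : Polynomial.degree ((Equiv.Perm.sign ρ : ℤ) : R[X]) ≤ 0 := degree_intCast_le _
    refine le_trans (add_le_add hz (Polynomial.degree_le_natDegree)) ?_
    rw [zero_add]
    set L := ((List.finRange n).filter (fun k => (k : Fin n) ≠ s)).map
        (fun k => A.charMat (τ k) (ρ (τ k))) with hL
    have h1 := Polynomial.natDegree_list_prod_le L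
    have h2 := List.sum_le_card_nsmul (L.map natDegree) 1 (by
      intro x hx
      simp only [List.mem_map] at hx
      obtain ⟨p, hp, rfl⟩ := hx
      rw [hL] at hp
      simp only [List.mem_map] at hp
      obtain ⟨k, -, rfl⟩ := hp
      exact charMat_natDegree_le A _ _)
    have h3 : (L.map natDegree).length = n - 1 := by
      rw [List.length_map, hL, List.length_map, length_filter_ne]
    rw [h3, smul_eq_mul, mul_one] at h2
    exact_mod_cast Nat.cast_le.mpr (h1.trans h2)
  · rw [if_neg hc]
    simp
end main

open Polynomial in
theorem sCharPoly_degree_le_and_coeff_n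
    {n : ℕ} (hn : 1 ≤ n) {R : Type*} [Ring R] (A : Matrix (Fin n) (Fin n) R) :
    A.sCharPoly.degree ≤ n ∧ A.sCharPoly.coeff n = (n.factorial : R) := by
  classical
  have hsc : A.sCharPoly = ∑ s : Fin n, ∑ j : Fin n,
      A.charMat.preadjoint s j * A.charMat j s := by
    simp [Matrix.sCharPoly, Matrix.sdet, Matrix.trace, Matrix.diag, Matrix.mul_apply]
  have hn1 : n - 1 + 1 = n := by omega
  constructor
  · rw [hsc]
    refine (degree_sum_le _ _).trans (Finset.sup_le fun s _ => ?_)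
    refine (degree_sum_le _ _).trans (Finset.sup_le fun j _ => ?_)
    refine (degree_mul_le _ _).trans ?_
    refine le_trans (add_le_add (preadjoint_charMat_degree_le A s j)
      (charMat_degree_le A j s)) ?_
    have : ((n - 1 : ℕ) : WithBot ℕ) + (1 : ℕ) ≤ ((n : ℕ) : WithBot ℕ) := by
      rw [← Nat.cast_add, hn1]
    exact_mod_cast this
  · rw [hsc, Polynomial.finset_sum_coeff]
    have hterm : ∀ s j : Fin n, (A.charMat.preadjoint s j * A.charMat j s).coeff (n-1+1)
        = (if s = j then ((n-1).factorial : R) else 0) * (if j = s then (1:R) else 0) := by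
      intro s j
      have hcm := coeff_mul_of_degree_le' (a := n-1) (b := 1)
        (preadjoint_charMat_degree_le A s j)
        (by exact_mod_cast charMat_degree_le A j s)
      rw [hcm, preadjoint_charMat_coeff, charMat_coeff_one]
    rw [hn1] at hterm
    have hsum : ∀ s : Fin n,
        (∑ j : Fin n, A.charMat.preadjoint s j * A.charMat j s).coeff n
          = ((n-1).factorial : R) := by
      intro s
      rw [Polynomial.finset_sum_coeff]
      simp_rw [hterm]
      rw [Finset.sum_eq_single s]
      · simp
      · intro j _ hj
        simp [hj.symm]
      · simp
    simp_rw [hsum]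
    rw [Finset.sum_const, Finset.card_univ, Fintype.card_fin, nsmul_eq_mul,
      ← Nat.cast_mul, Nat.mul_factorial_pred (by omega)]
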